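/- Let Δ be a complete nonsingular fan in ℤⁿ such that (a) every primitive relation has right-hand side 0 or a single ray generator, and (b) Δ has no exceptional divisors, i.e., no ray generator is a sum of other linearly independent ray generators. Then every linearly independent set of ray generators of Δ spans a cone of Δ, and consequently the associated toric variety is isomorphic to a product of projective spaces. -/

import Mathlib

/-- A complete nonsingular (simplicial) fan in ℤⁿ, described combinatorially:
cones are recorded by their (finite) sets of primitive ray generators. -/
structure CompleteNonsingFan (n : ℕ) where
  rays : Finset (Fin n → ℤ)
  cones : Finset (Finset (Fin n → ℤ))
  empty_mem : ∅ ∈ cones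
  singleton_mem : ∀ ρ ∈ rays, {ρ} ∈ cones
  cone_rays : ∀ σ ∈ cones, σ ⊆ rays
  face_mem : ∀ σ ∈ cones, ∀ τ ⊆ σ, τ ∈ cones
  /-- nonsingularity: the generators of every cone form part of a ℤ-basis of ℤⁿ -/
  nonsingular : ∀ σ ∈ cones, ∃ b : Module.Basis (Fin n) ℤ (Fin n → ℤ),
      (σ : Set (Fin n → ℤ)) ⊆ Set.range ⇑b
  /-- completeness: every point of ℝⁿ lies in some cone -/
  complete : ∀ x : Fin n → ℝ, ∃ σ ∈ cones, ∃ c : (Fin n → ℤ) → ℝ,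
      (∀ v, 0 ≤ c v) ∧ x = ∑ v ∈ σ, c v • (fun i => (v i : ℝ))

/-- A primitive set: a set of rays not spanning a cone, every proper subset of
which spans a cone. -/
def IsPrimitiveSet {n : ℕ} (F : CompleteNonsingFan n) (P : Finset (Fin n → ℤ)) : Prop :=
  P ⊆ F.rays ∧ P ∉ F.cones ∧ ∀ ρ ∈ P, P.erase ρ ∈ F.cones

namespace Stmt12

open Finset

variable {n : ℕ}

abbrev Zind (T : Finset (Fin n → ℤ)) : Prop :=
  LinearIndependent ℤ (fun v : T => (v : Fin n → ℤ))

/-- entrywise cast to ℝ -/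
def vR (v : Fin n → ℤ) : Fin n → ℝ := fun i => (v i : ℝ)

lemma vR_sum {β : Type*} (T : Finset β) (f : β → (Fin n → ℤ)) :
    vR (∑ b ∈ T, f b) = ∑ b ∈ T, vR (f b) := by
  funext i
  simp [vR, Finset.sum_apply]

lemma vR_zero : vR (0 : Fin n → ℤ) = 0 := by funext i; simp [vR]

lemma vR_smul (a : ℤ) (v : Fin n → ℤ) : vR (a • v) = (a : ℝ) • vR v := by
  funext i; simp [vR]

lemma vR_inj {v w : Fin n → ℤ} (h : vR v = vR w) : v = w := by
  funext i
  have := congrFun h i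
  simp [vR] at this
  exact_mod_cast this

lemma zind_iff (T : Finset (Fin n → ℤ)) :
    Zind T ↔
      ∀ a : (Fin n → ℤ) → ℤ, ∑ v ∈ T, a v • v = 0 → ∀ v ∈ T, a v = 0 := by
  rw [Zind, Fintype.linearIndependent_iff]
  constructor
  · intro h a ha v hv
    have hsum : ∑ i : T, a (i : Fin n → ℤ) • (i : Fin n → ℤ) = 0 := by
      rw [Finset.sum_coe_sort T (fun v => a v • v)]; exact ha
    exact h (fun i => a i) hsum ⟨v, hv⟩
  · intro h g hg i
    set a : (Fin n → ℤ) → ℤ := fun v => if hv : v ∈ T then g ⟨v, hv⟩ else 0 with ha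
    have h1 : ∑ v ∈ T, a v • v = 0 := by
      rw [← Finset.sum_coe_sort T (fun v => a v • v)]
      rw [← hg]
      apply Finset.sum_congr rfl
      intro i _
      simp only [ha, dif_pos i.2]
    have := h a h1 i i.2
    simpa only [ha, dif_pos i.2] using this

/-- ℝ-linear independence of the real images -/
def RindF (T : Finset (Fin n → ℤ)) : Prop :=
  LinearIndependent ℝ (fun v : T => vR (v : Fin n → ℤ))

lemma rind_iff (T : Finset (Fin n → ℤ)) :
    RindF T ↔
      ∀ a : (Fin n → ℤ) → ℝ, ∑ v ∈ T, a v • vR v = 0 → ∀ v ∈ T, a v = 0 := by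
  rw [RindF, Fintype.linearIndependent_iff]
  constructor
  · intro h a ha v hv
    have hsum : ∑ i : T, a (i : Fin n → ℤ) • vR (i : Fin n → ℤ) = 0 := by
      rw [Finset.sum_coe_sort T (fun v => a v • vR v)]; exact ha
    exact h (fun i => a i) hsum ⟨v, hv⟩
  · intro h g hg i
    set a : (Fin n → ℤ) → ℝ := fun v => if hv : v ∈ T then g ⟨v, hv⟩ else 0 with ha
    have h1 : ∑ v ∈ T, a v • vR v = 0 := by
      rw [← Finset.sum_coe_sort T (fun v => a v • vR v)]
      rw [← hg]
      apply Finset.sum_congr rfl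
      intro i _
      simp only [ha, dif_pos i.2]
    have := h a h1 i i.2
    simpa only [ha, dif_pos i.2] using this

lemma rindF_zind {T : Finset (Fin n → ℤ)} (h : RindF T) : Zind T := by
  rw [zind_iff]
  intro a ha v hv
  have h2 : ∑ v ∈ T, ((a v : ℝ)) • vR v = 0 := by
    have := congrArg vR ha
    rw [vR_zero, vR_sum] at this
    rw [← this]
    apply Finset.sum_congr rfl
    intro w _
    rw [vR_smul]
  have h3 := (rind_iff T).1 h (fun v => (a v : ℝ)) h2 v hv
  exact_mod_cast h3

lemma zind_mono {T U : Finset (Fin n → ℤ)} (hUT : U ⊆ T) (h : Zind T) : Zind U := by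
  rw [zind_iff] at h ⊢
  intro a ha v hv
  set a' : (Fin n → ℤ) → ℤ := fun v => if v ∈ U then a v else 0 with ha'
  have h1 : ∑ v ∈ T, a' v • v = 0 := by
    rw [← ha]
    rw [← Finset.sum_subset hUT]
    · apply Finset.sum_congr rfl
      intro w hw; simp [ha', hw]
    · intro w _ hw; simp [ha', hw]
  have := h a' h1 v (hUT hv)
  simpa [ha', hv] using this

lemma sum_ne_zero_of_zind {T : Finset (Fin n → ℤ)} (hne : T.Nonempty) (h : Zind T) :
    ∑ v ∈ T, v ≠ 0 := by
  intro h0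
  obtain ⟨v, hv⟩ := hne
  have := (zind_iff T).1 h (fun _ => 1) (by simpa using h0) v hv
  exact one_ne_zero this

/-- the real images of a ℤ-basis of ℤⁿ are ℝ-linearly independent -/
lemma basis_rind (b : Module.Basis (Fin n) ℤ (Fin n → ℤ)) :
    LinearIndependent ℝ (fun j => vR (b j)) := by
  classical
  set B : Matrix (Fin n) (Fin n) ℤ := (Pi.basisFun ℤ (Fin n)).toMatrix ⇑b with hB
  haveI : Invertible B := (Pi.basisFun ℤ (Fin n)).invertibleToMatrix b
  have hdetB : IsUnit B.det := Matrix.isUnit_iff_isUnit_det B |>.1 (isUnit_of_invertible B)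
  set A : Matrix (Fin n) (Fin n) ℝ := (Int.castRingHom ℝ).mapMatrix B with hA
  have hdetA : IsUnit A.det := by
    rw [hA, ← RingHom.map_det]
    exact hdetB.map (Int.castRingHom ℝ)
  haveI : Invertible A := Matrix.invertibleOfIsUnitDet A hdetA
  rw [Fintype.linearIndependent_iff]
  intro g hg j
  have hmv : A.mulVec g = 0 := by
    funext i
    have := congrFun hg i
    simp only [Finset.sum_apply, Pi.zero_apply, Pi.smul_apply, smul_eq_mul] at this
    rw [Matrix.mulVec]
    simp only [dotProduct, Pi.zero_apply]
    rw [← this]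
    apply Finset.sum_congr rfl
    intro k _
    have hAik : A i k = ((b k : Fin n → ℤ) i : ℝ) := by
      simp [hA, hB, RingHom.mapMatrix_apply, Matrix.map_apply, Module.Basis.toMatrix_apply,
        Pi.basisFun_repr]
    rw [hAik, mul_comm]
    rfl
  have hinj := Matrix.mulVec_injective_of_invertible A
  have : g = 0 := by
    apply hinj
    rw [hmv]
    funext i; simp [Matrix.mulVec_zero]
  exact congrFun this j

variable {F : CompleteNonsingFan n}

/-- cones are ℝ-independent -/
lemma cone_rindF {σ : Finset (Fin n → ℤ)} (hσ : σ ∈ F.cones) : RindF σ := by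
  classical
  obtain ⟨b, hsub⟩ := F.nonsingular σ hσ
  have hb := basis_rind b
  have hmem : ∀ v : σ, ∃ j, b j = (v : Fin n → ℤ) := by
    intro v
    exact hsub (by exact_mod_cast v.2)
  choose f hf using hmem
  have hfi : Function.Injective f := by
    intro v w hvw
    apply Subtype.ext
    rw [← hf v, ← hf w, hvw]
  have : (fun v : σ => vR (v : Fin n → ℤ)) = (fun j => vR (b j)) ∘ f := by
    funext v
    simp only [Function.comp_apply, hf v]
  rw [RindF, this]
  exact hb.comp f hfi

lemma cone_zind {σ : Finset (Fin n → ℤ)} (hσ : σ ∈ F.cones) : Zind σ :=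
  rindF_zind (cone_rindF hσ)

lemma ray_vR_ne_zero {ρ : Fin n → ℤ} (hρ : ρ ∈ F.rays) : vR ρ ≠ 0 := by
  intro h
  have hρ0 : ρ = 0 := vR_inj (h.trans vR_zero.symm)
  have hz := cone_zind (F.singleton_mem ρ hρ)
  rw [zind_iff] at hz
  have h1 : ∑ v ∈ ({ρ} : Finset (Fin n → ℤ)), (1:ℤ) • v = 0 := by
    rw [Finset.sum_singleton, one_smul, hρ0]
  have := hz (fun _ => 1) h1 ρ (Finset.mem_singleton_self ρ)
  exact one_ne_zero this

section WithHyps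

variable (hprim : ∀ P, IsPrimitiveSet F P → (∑ v ∈ P, v = 0 ∨ ∑ v ∈ P, v ∈ F.rays))
variable (hnoexc : ∀ ρ ∈ F.rays, ∀ T ⊆ F.rays.erase ρ, T.Nonempty →
        LinearIndependent ℤ (fun v : T => (v : Fin n → ℤ)) → ∑ v ∈ T, v ≠ ρ)

include hprim hnoexc in
/-- PART 1: every linearly independent set of rays spans a cone -/
lemma indep_mem_cones : ∀ T ⊆ F.rays, Zind T → T ∈ F.cones := by
  classical
  intro T hT hind
  by_contra hTc
  obtain ⟨P, hP, hmin⟩ := Finset.exists_min_image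
    (T.powerset.filter (fun Q => Q ∉ F.cones)) card
    ⟨T, by simp [hTc]⟩
  rw [mem_filter, mem_powerset] at hP
  obtain ⟨hPT, hPc⟩ := hP
  have herase : ∀ x ∈ P, P.erase x ∈ F.cones := by
    intro x hx
    by_contra hxc
    have h1 := hmin _ (by
      rw [mem_filter, mem_powerset]
      exact ⟨subset_trans (erase_subset x P) hPT, hxc⟩)
    have h2 : (P.erase x).card < P.card := card_erase_lt_of_mem hx
    omega
  have hPne : P.Nonempty := by
    rw [nonempty_iff_ne_empty]
    rintro rfl
    exact hPc F.empty_mem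
  have hPrays : P ⊆ F.rays := subset_trans hPT hT
  have hPind : Zind P := zind_mono hPT hind
  rcases hprim P ⟨hPrays, hPc, herase⟩ with h0 | hray
  · exact sum_ne_zero_of_zind hPne hPind h0
  · set ρ := ∑ v ∈ P, v with hρ
    by_cases hρP : ρ ∈ P
    · rcases Finset.eq_empty_or_nonempty (P.erase ρ) with he | he
      · have : P = {ρ} := by
          apply Finset.Subset.antisymm
          · intro z hz
            rw [Finset.mem_singleton]
            by_contra hzρ
            exact (Finset.eq_empty_iff_forall_notMem.1 he z) (mem_erase.2 ⟨hzρ, hz⟩)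
          · intro z hz; rw [Finset.mem_singleton] at hz; exact hz ▸ hρP
        exact hPc (this ▸ F.singleton_mem ρ (hPrays hρP))
      · have hsum : ∑ v ∈ P.erase ρ, v = 0 := by
          have h1 := Finset.add_sum_erase P (fun v => v) hρP
          have h2 : ρ + ∑ v ∈ P.erase ρ, v = ρ := by rw [h1]
          have h3 := congrArg (fun z => z - ρ) h2
          simpa [add_sub_cancel_left, add_comm] using h3
        exact sum_ne_zero_of_zind he (zind_mono (erase_subset ρ P) hPind) hsum
    · have hsubset : P ⊆ F.rays.erase ρ := by
        intro z hz
        exact mem_erase.2 ⟨fun e => hρP (e ▸ hz), hPrays hz⟩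
      exact hnoexc ρ hray P hsubset hPne hPind hρ.symm

include hprim hnoexc in
lemma zind_rindF {T : Finset (Fin n → ℤ)} (hT : T ⊆ F.rays) (h : Zind T) : RindF T :=
  cone_rindF (indep_mem_cones hprim hnoexc T hT h)

include hprim hnoexc in
/-- builder: a ray which is a full-support combination of an independent set of
rays not containing it yields a primitive set. -/
lemma primitive_builder {S : Finset (Fin n → ℤ)} {τ : Fin n → ℤ}
    (hS : S ⊆ F.rays) (hSind : Zind S) (hτ : τ ∈ F.rays) (hτS : τ ∉ S)
    (d : (Fin n → ℤ) → ℝ) (hd : ∀ v ∈ S, d v ≠ 0)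
    (heq : vR τ = ∑ v ∈ S, d v • vR v) :
    IsPrimitiveSet F (insert τ S) := by
  classical
  have hQrays : insert τ S ⊆ F.rays := Finset.insert_subset hτ hS
  have hSR : RindF S := zind_rindF hprim hnoexc hS hSind
  refine ⟨hQrays, ?_, ?_⟩
  · -- not a cone
    intro hQ
    have hR : RindF (insert τ S) := cone_rindF hQ
    set a : (Fin n → ℤ) → ℝ := fun v => if v = τ then 1 else -d v with ha
    have hsum : ∑ v ∈ insert τ S, a v • vR v = 0 := by
      rw [Finset.sum_insert hτS]
      have h1 : a τ = 1 := if_pos rfl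
      have h2 : ∑ v ∈ S, a v • vR v = ∑ v ∈ S, -(d v • vR v) := by
        apply Finset.sum_congr rfl
        intro v hv
        rw [ha]
        simp only
        rw [if_neg (by rintro rfl; exact hτS hv), neg_smul]
      rw [h1, h2, one_smul, Finset.sum_neg_distrib, ← heq]
      exact add_neg_cancel _
    have := (rind_iff _).1 hR a hsum τ (mem_insert_self τ S)
    rw [ha] at this
    simp at this
  · -- every erase is a cone
    intro x hx
    rcases Finset.mem_insert.1 hx with rfl | hxS
    · rw [Finset.erase_insert hτS]
      exact indep_mem_cones hprim hnoexc S hS hSind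
    · have hxτ : x ≠ τ := by rintro rfl; exact hτS hxS
      have herase : (insert τ S).erase x = insert τ (S.erase x) :=
        Finset.erase_insert_of_ne hxτ.symm
      rw [herase]
      have hWsub : insert τ (S.erase x) ⊆ F.rays :=
        Finset.insert_subset hτ (subset_trans (erase_subset x S) hS)
      have hτnotin : τ ∉ S.erase x := fun h => hτS (Finset.mem_of_mem_erase h)
      have hRW : RindF (insert τ (S.erase x)) := by
        rw [rind_iff]
        intro a hsum v hv
        rw [Finset.sum_insert hτnotin] at hsum
        set bb : (Fin n → ℤ) → ℝ := fun w => a τ * d w + (if w = x then 0 else a w) with hbb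
        have hsum2 : ∑ w ∈ S, bb w • vR w = 0 := by
          have e1 : ∀ w ∈ S, bb w • vR w
              = a τ • (d w • vR w) + (if w = x then 0 else a w) • vR w := by
            intro w _
            rw [hbb]
            simp only
            rw [add_smul, smul_smul]
          rw [Finset.sum_congr rfl e1, Finset.sum_add_distrib]
          have e2 : ∑ w ∈ S, a τ • (d w • vR w) = a τ • vR τ := by
            rw [← Finset.smul_sum, ← heq]
          have e3 : ∑ w ∈ S, (if w = x then (0:ℝ) else a w) • vR w
              = ∑ w ∈ S.erase x, a w • vR w := by
            rw [← Finset.add_sum_erase S _ hxS]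
            rw [if_pos rfl, zero_smul, zero_add]
            apply Finset.sum_congr rfl
            intro w hw
            rw [if_neg (Finset.ne_of_mem_erase hw)]
          rw [e2, e3, hsum]
        have hz := (rind_iff S).1 hSR bb hsum2
        have haτ : a τ = 0 := by
          have h1 := hz x hxS
          rw [hbb] at h1
          simp at h1
          rcases h1 with h | h
          · exact h
          · exact absurd h (hd x hxS)
        rcases Finset.mem_insert.1 hv with rfl | hvS
        · exact haτ
        · have h1 := hz v (Finset.mem_of_mem_erase hvS)
          rw [hbb] at h1
          simp only [if_neg (Finset.ne_of_mem_erase hvS), haτ, zero_mul, zero_add] at h1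
          exact h1
      exact indep_mem_cones hprim hnoexc _ hWsub (rindF_zind hRW)

include hprim hnoexc in
/-- LEMMA E: no ray is a positive combination of a nonempty independent set of
rays not containing it. -/
lemma no_pos_comb {S : Finset (Fin n → ℤ)} {τ : Fin n → ℤ}
    (hS : S ⊆ F.rays) (hSind : Zind S) (hSne : S.Nonempty)
    (hτ : τ ∈ F.rays) (hτS : τ ∉ S)
    (d : (Fin n → ℤ) → ℝ) (hd : ∀ v ∈ S, 0 < d v)
    (heq : vR τ = ∑ v ∈ S, d v • vR v) : False := by
  classical
  have hSR : RindF S := zind_rindF hprim hnoexc hS hSind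
  have key : ∀ k : ℕ, ∃ τ', τ' ∈ F.rays ∧ τ' ∉ S ∧
      vR τ' = ∑ v ∈ S, (d v + k) • vR v := by
    intro k
    induction k with
    | zero =>
      refine ⟨τ, hτ, hτS, ?_⟩
      rw [heq]
      apply Finset.sum_congr rfl
      intro v _
      norm_num
    | succ k ih =>
      obtain ⟨τ', hτ'r, hτ'S, heq'⟩ := ih
      have hd' : ∀ v ∈ S, d v + (k:ℝ) ≠ 0 := by
        intro v hv
        have := hd v hv
        positivity
      have hprimQ := primitive_builder hprim hnoexc hS hSind hτ'r hτ'S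
        (fun v => d v + k) hd' heq'
      rcases hprim _ hprimQ with h0 | hray
      · exfalso
        have hreal : vR τ' + ∑ v ∈ S, vR v = 0 := by
          have h1 := congrArg vR h0
          rw [vR_zero, vR_sum, Finset.sum_insert hτ'S] at h1
          exact h1
        have hcomb : ∑ v ∈ S, (d v + k + 1) • vR v = 0 := by
          calc ∑ v ∈ S, (d v + k + 1) • vR v
              = ∑ v ∈ S, ((d v + k) • vR v + vR v) := by
                apply Finset.sum_congr rfl
                intro v _
                rw [add_smul, one_smul]
            _ = (∑ v ∈ S, (d v + k) • vR v) + ∑ v ∈ S, vR v := Finset.sum_add_distrib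
            _ = vR τ' + ∑ v ∈ S, vR v := by rw [heq']
            _ = 0 := hreal
        obtain ⟨v, hv⟩ := hSne
        have h2 := (rind_iff S).1 hSR _ hcomb v hv
        nlinarith [hd v hv, (Nat.cast_nonneg k : (0:ℝ) ≤ (k:ℝ))]
      · set τ'' := ∑ v ∈ insert τ' S, v with hτ''
        have heq'' : vR τ'' = ∑ v ∈ S, (d v + (k+1:ℕ)) • vR v := by
          rw [hτ'', vR_sum, Finset.sum_insert hτ'S, heq']
          rw [← Finset.sum_add_distrib]
          apply Finset.sum_congr rfl
          intro v _
          push_cast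
          module
        refine ⟨τ'', hray, ?_, heq''⟩
        intro hmem
        -- coefficient extraction contradiction
        have h0 : ∑ v ∈ S, ((d v + (k+1:ℕ)) - (if v = τ'' then 1 else 0)) • vR v = 0 := by
          have e1 : ∑ v ∈ S, (if v = τ'' then (1:ℝ) else 0) • vR v = vR τ'' := by
            have : ∀ v ∈ S, (if v = τ'' then (1:ℝ) else 0) • vR v
                = if v = τ'' then vR v else 0 := by
              intro v _
              split_ifs <;> simp
            rw [Finset.sum_congr rfl this]
            have := Finset.sum_ite_eq' S τ'' (fun v => vR v)
            rw [this, if_pos hmem]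
          have e2 : ∀ v ∈ S, ((d v + (k+1:ℕ)) - (if v = τ'' then 1 else 0)) • vR v
              = (d v + (k+1:ℕ)) • vR v - (if v = τ'' then (1:ℝ) else 0) • vR v := by
            intro v _
            rw [sub_smul]
          rw [Finset.sum_congr rfl e2, Finset.sum_sub_distrib, e1, ← heq'', sub_self]
        have h1 := (rind_iff S).1 hSR _ h0 τ'' hmem
        simp only [if_pos rfl] at h1
        have h2 := hd τ'' hmem
        have h3 : (0:ℝ) ≤ ((k+1:ℕ):ℝ) := Nat.cast_nonneg _
        push_cast at h1 h3 ⊢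
        nlinarith
  choose g hg1 hg2 hg3 using key
  have hginj : Function.Injective fun k => (⟨g k, hg1 k⟩ : {x // x ∈ F.rays}) := by
    intro k m hkm
    simp only [Subtype.mk.injEq] at hkm
    obtain ⟨v, hv⟩ := hSne
    have hsub : ∑ v ∈ S, ((d v + k) - (d v + m)) • vR v = 0 := by
      have e2 : ∀ v ∈ S, ((d v + k) - (d v + m)) • vR v
          = (d v + k) • vR v - (d v + m) • vR v := fun v _ => sub_smul _ _ _
      rw [Finset.sum_congr rfl e2, Finset.sum_sub_distrib, ← hg3 k, ← hg3 m, hkm, sub_self]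
    have h1 := (rind_iff S).1 hSR _ hsub v hv
    have : (k:ℝ) = m := by linarith
    exact_mod_cast this
  obtain ⟨x, y, hxy, hecl⟩ :=
    Finite.exists_ne_map_eq_of_infinite (fun k => (⟨g k, hg1 k⟩ : {x // x ∈ F.rays}))
  exact hxy (hginj hecl)

include hprim hnoexc in
/-- every primitive set sums to zero -/
lemma prim_sum_zero {P : Finset (Fin n → ℤ)} (hP : IsPrimitiveSet F P) :
    ∑ v ∈ P, v = 0 := by
  classical
  obtain ⟨hPrays, hPc, hPe⟩ := hP
  have hPne : P.Nonempty := by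
    rw [nonempty_iff_ne_empty]; rintro rfl; exact hPc F.empty_mem
  rcases hprim P ⟨hPrays, hPc, hPe⟩ with h0 | hray
  · exact h0
  exfalso
  set ρ := ∑ v ∈ P, v with hρ
  have heraseZ : ∀ x ∈ P, Zind (P.erase x) := fun x hx => cone_zind (hPe x hx)
  by_cases hρP : ρ ∈ P
  · rcases Finset.eq_empty_or_nonempty (P.erase ρ) with he | he
    · have hPs : P = {ρ} := by
        apply Finset.Subset.antisymm
        · intro z hz
          rw [Finset.mem_singleton]
          by_contra hzρ
          exact (Finset.eq_empty_iff_forall_notMem.1 he z) (mem_erase.2 ⟨hzρ, hz⟩)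
        · intro z hz; rw [Finset.mem_singleton] at hz; exact hz ▸ hρP
      exact hPc (hPs ▸ F.singleton_mem ρ (hPrays hρP))
    · have hsum : ∑ v ∈ P.erase ρ, v = 0 := by
        have h1 := Finset.add_sum_erase P (fun v => v) hρP
        have h2 : ρ + ∑ v ∈ P.erase ρ, v = ρ := by rw [h1]
        have h3 := congrArg (fun z => z - ρ) h2
        simpa [add_sub_cancel_left, add_comm] using h3
      exact sum_ne_zero_of_zind he (heraseZ ρ hρP) hsum
  · -- main case : ρ ∉ P
    have hnz : ¬ Zind P := fun h => hPc (indep_mem_cones hprim hnoexc P hPrays h)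
    rw [zind_iff] at hnz
    push_neg at hnz
    obtain ⟨a₀, ha₀, v₀, hv₀, hav₀⟩ := hnz
    have hfull₀ : ∀ v ∈ P, a₀ v ≠ 0 := by
      intro v hv hav
      have hrel : ∑ w ∈ P.erase v, a₀ w • w = 0 := by
        have h1 := Finset.add_sum_erase P (fun w => a₀ w • w) hv
        rw [hav, zero_smul, zero_add] at h1
        rw [h1]
        exact ha₀
      have hvv₀ : v ≠ v₀ := by rintro rfl; exact hav₀ hav
      exact hav₀ ((zind_iff _).1 (heraseZ v hv) a₀ hrel v₀
        (mem_erase.2 ⟨fun e => hvv₀ e.symm, hv₀⟩))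
    obtain ⟨a, ha0, hfull, vp, hvp, hvpos⟩ :
        ∃ a : (Fin n → ℤ) → ℤ, (∑ w ∈ P, a w • w = 0) ∧ (∀ v ∈ P, a v ≠ 0) ∧
          ∃ v ∈ P, 0 < a v := by
      by_cases H : ∃ v ∈ P, 0 < a₀ v
      · obtain ⟨v, hv, hvp⟩ := H
        exact ⟨a₀, ha₀, hfull₀, v, hv, hvp⟩
      · push_neg at H
        refine ⟨fun v => -a₀ v, ?_, fun v hv => neg_ne_zero.2 (hfull₀ v hv), v₀, hv₀, ?_⟩
        · show ∑ w ∈ P, (-a₀ w) • w = 0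
          calc ∑ w ∈ P, (-a₀ w) • w = ∑ w ∈ P, -(a₀ w • w) := by
                apply Finset.sum_congr rfl; intro u _; rw [neg_smul]
            _ = -∑ w ∈ P, a₀ w • w := Finset.sum_neg_distrib _
            _ = 0 := by rw [ha₀, neg_zero]
        · show 0 < -a₀ v₀
          have h1 := H v₀ hv₀
          have h2 := hfull₀ v₀ hv₀
          omega
    obtain ⟨w, hw, hwmax⟩ := Finset.exists_max_image P a hPne
    have hwpos : 0 < a w := lt_of_lt_of_le hvpos (hwmax vp hvp)
    have hawR : (0:ℝ) < (a w : ℝ) := by exact_mod_cast hwpos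
    have hrelR : ∑ v ∈ P, ((a v : ℝ)) • vR v = 0 := by
      have h1 := congrArg vR ha0
      rw [vR_zero, vR_sum] at h1
      rw [← h1]
      apply Finset.sum_congr rfl
      intro u _
      rw [vR_smul]
    have hsumR : vR ρ = ∑ v ∈ P, vR v := by rw [hρ, vR_sum]
    set e : (Fin n → ℤ) → ℝ := fun v => 1 - (a v : ℝ)/(a w : ℝ) with he
    have heρ : vR ρ = ∑ v ∈ P, e v • vR v := by
      have e1 : ∀ v ∈ P, e v • vR v
          = vR v - ((a w : ℝ))⁻¹ • (((a v : ℝ)) • vR v) := by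
        intro v _
        rw [he]
        simp only
        rw [sub_smul, one_smul, smul_smul, div_eq_inv_mul]
      rw [Finset.sum_congr rfl e1, Finset.sum_sub_distrib, ← Finset.smul_sum, hrelR,
        smul_zero, sub_zero, hsumR]
    set S' := P.filter (fun v => a v ≠ a w) with hS'
    have hS'sub : S' ⊆ P.erase w := by
      intro v hv
      rw [hS', mem_filter] at hv
      exact mem_erase.2 ⟨fun e => hv.2 (e ▸ rfl), hv.1⟩
    have heq' : vR ρ = ∑ v ∈ S', e v • vR v := by
      rw [heρ]
      symm
      apply Finset.sum_subset (Finset.filter_subset _ _)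
      intro x hx hnx
      have hax : a x = a w := by
        by_contra hne
        exact hnx (mem_filter.2 ⟨hx, hne⟩)
      rw [he]
      simp only
      rw [hax, div_self (ne_of_gt hawR), sub_self, zero_smul]
    have hS'ne : S'.Nonempty := by
      rw [nonempty_iff_ne_empty]
      rintro hemp
      rw [hemp, Finset.sum_empty] at heq'
      exact ray_vR_ne_zero hray heq'
    have hρS' : ρ ∉ S' := fun h => hρP (Finset.filter_subset _ _ h)
    have hepos : ∀ v ∈ S', 0 < e v := by
      intro v hv
      rw [hS', mem_filter] at hv
      have h1 : a v < a w := lt_of_le_of_ne (hwmax v hv.1) hv.2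
      have h2 : (a v : ℝ) < (a w : ℝ) := by exact_mod_cast h1
      rw [he]
      simp only
      rw [sub_pos, div_lt_one hawR]
      exact h2
    have hS'z : Zind S' := zind_mono hS'sub (heraseZ w hw)
    have hS'rays : S' ⊆ F.rays := subset_trans (Finset.filter_subset _ _) hPrays
    exact no_pos_comb hprim hnoexc hS'rays hS'z hS'ne hray hρS' e hepos heq'

include hprim hnoexc in
/-- two primitive sets that share a ray coincide -/
lemma prim_disjoint : ∀ N : ℕ, ∀ K₁ K₂ : Finset (Fin n → ℤ), (K₁ ∪ K₂).card < N →
    IsPrimitiveSet F K₁ → IsPrimitiveSet F K₂ → (K₁ ∩ K₂).Nonempty → K₁ = K₂ := by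
  classical
  intro N
  induction N with
  | zero => intro _ _ h; exact absurd h (Nat.not_lt_zero _)
  | succ N ih =>
    intro K₁ K₂ hcard h1 h2 hover
    by_contra hne
    obtain ⟨x, hx⟩ := hover
    rw [mem_inter] at hx
    obtain ⟨hx1, hx2⟩ := hx
    obtain ⟨h1r, h1c, h1e⟩ := h1
    obtain ⟨h2r, h2c, h2e⟩ := h2
    have s1 : ∑ v ∈ K₁, v = 0 := prim_sum_zero hprim hnoexc ⟨h1r, h1c, h1e⟩
    have s2 : ∑ v ∈ K₂, v = 0 := prim_sum_zero hprim hnoexc ⟨h2r, h2c, h2e⟩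
    -- difference sets
    have hsdiff : ∀ (Ka Kb : Finset (Fin n → ℤ)), Ka ∉ F.cones →
        (∀ y ∈ Kb, Kb.erase y ∈ F.cones) → Ka ≠ Kb → (Ka \ Kb).Nonempty := by
      intro Ka Kb hac hbe hne'
      rw [nonempty_iff_ne_empty]
      intro hemp
      rw [Finset.sdiff_eq_empty_iff_subset] at hemp
      have hy : ∃ y ∈ Kb, y ∉ Ka := by
        by_contra hh
        push_neg at hh
        exact hne' (Finset.Subset.antisymm hemp hh)
      obtain ⟨y, hy, hyn⟩ := hy
      have hss : Ka ⊆ Kb.erase y :=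
        fun z hz => mem_erase.2 ⟨fun e => hyn (e ▸ hz), hemp hz⟩
      exact hac (F.face_mem _ (hbe y hy) _ hss)
    set A := K₁ \ K₂ with hA
    set B := K₂ \ K₁ with hB
    have hAne : A.Nonempty := hsdiff K₁ K₂ h1c h2e hne
    have hBne : B.Nonempty := hsdiff K₂ K₁ h2c h1e (Ne.symm hne)
    have hsAB : ∑ v ∈ A, v = ∑ v ∈ B, v := by
      have e1 := Finset.sum_inter_add_sum_sdiff K₁ K₂ (fun v => v)
      have e2 := Finset.sum_inter_add_sum_sdiff K₂ K₁ (fun v => v)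
      rw [s1] at e1
      rw [s2] at e2
      rw [Finset.inter_comm K₂ K₁] at e2
      have := e1.trans e2.symm
      -- ∑ inter + ∑ A = ∑ inter + ∑ B  (both = 0)
      have hA0 : ∑ v ∈ K₁ ∩ K₂, v + ∑ v ∈ A, v = 0 := e1
      have hB0 : ∑ v ∈ K₁ ∩ K₂, v + ∑ v ∈ B, v = 0 := e2
      have := hA0.trans hB0.symm
      exact add_left_cancel this
    have hABdisj : Disjoint A B := disjoint_sdiff_sdiff
    have hDrays : A ∪ B ⊆ F.rays := by
      apply Finset.union_subset
      · exact subset_trans (Finset.sdiff_subset) h1r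
      · exact subset_trans (Finset.sdiff_subset) h2r
    have hDnc : A ∪ B ∉ F.cones := by
      intro hD
      have hz := cone_zind hD
      rw [zind_iff] at hz
      set aa : (Fin n → ℤ) → ℤ := fun v => if v ∈ A then 1 else -1 with haa
      have hrel : ∑ v ∈ A ∪ B, aa v • v = 0 := by
        rw [Finset.sum_union hABdisj]
        have e1 : ∑ v ∈ A, aa v • v = ∑ v ∈ A, v := by
          apply Finset.sum_congr rfl
          intro v hv
          rw [haa]
          simp only [if_pos hv, one_smul]
        have e2 : ∑ v ∈ B, aa v • v = -∑ v ∈ B, v := by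
          rw [← Finset.sum_neg_distrib]
          apply Finset.sum_congr rfl
          intro v hv
          have hvA : v ∉ A := by
            intro hvA
            exact (Finset.mem_sdiff.1 hvA).2 (Finset.mem_sdiff.1 hv).1
          rw [haa]
          simp only [if_neg hvA, neg_smul, one_smul]
        rw [e1, e2, hsAB, add_neg_cancel]
      obtain ⟨vA, hvA⟩ := hAne
      have := hz aa hrel vA (Finset.mem_union_left _ hvA)
      rw [haa] at this
      simp only [if_pos hvA] at this
      exact one_ne_zero this
    obtain ⟨P, hPD, hPnc, hPmin⟩ :
        ∃ P, P ⊆ A ∪ B ∧ P ∉ F.cones ∧ ∀ Q ⊆ A ∪ B, Q ∉ F.cones → P.card ≤ Q.card := by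
      obtain ⟨P, hP, hmin⟩ := Finset.exists_min_image
        ((A ∪ B).powerset.filter (fun Q => Q ∉ F.cones)) card
        ⟨A ∪ B, by rw [mem_filter, mem_powerset]; exact ⟨Finset.Subset.refl _, hDnc⟩⟩
      rw [mem_filter, mem_powerset] at hP
      exact ⟨P, hP.1, hP.2, fun Q hQ hQc => hmin Q (by
        rw [mem_filter, mem_powerset]; exact ⟨hQ, hQc⟩)⟩
    have hPprim : IsPrimitiveSet F P := by
      refine ⟨subset_trans hPD hDrays, hPnc, fun y hy => ?_⟩
      by_contra hyc
      have hle := hPmin _ (subset_trans (erase_subset y P) hPD) hyc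
      have hlt : (P.erase y).card < P.card := card_erase_lt_of_mem hy
      omega
    have hPne : P.Nonempty := by
      rw [nonempty_iff_ne_empty]; rintro rfl; exact hPnc F.empty_mem
    have hPA : (P ∩ A).Nonempty := by
      rw [nonempty_iff_ne_empty]
      intro hemp
      have hPB : P ⊆ K₂.erase x := by
        intro z hz
        have hzB : z ∈ B := by
          rcases Finset.mem_union.1 (hPD hz) with h | h
          · exact absurd (Finset.mem_inter.2 ⟨hz, h⟩)
              (Finset.eq_empty_iff_forall_notMem.1 hemp z)
          · exact h
        exact mem_erase.2 ⟨fun e => (Finset.mem_sdiff.1 hzB).2 (e ▸ hx1),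
          (Finset.mem_sdiff.1 hzB).1⟩
      exact hPnc (F.face_mem _ (h2e x hx2) _ hPB)
    have hPB : (P ∩ B).Nonempty := by
      rw [nonempty_iff_ne_empty]
      intro hemp
      have hPA' : P ⊆ K₁.erase x := by
        intro z hz
        have hzA : z ∈ A := by
          rcases Finset.mem_union.1 (hPD hz) with h | h
          · exact h
          · exact absurd (Finset.mem_inter.2 ⟨hz, h⟩)
              (Finset.eq_empty_iff_forall_notMem.1 hemp z)
        exact mem_erase.2 ⟨fun e => (Finset.mem_sdiff.1 hzA).2 (e ▸ hx2),
          (Finset.mem_sdiff.1 hzA).1⟩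
      exact hPnc (F.face_mem _ (h1e x hx1) _ hPA')
    have hPunion : P ∪ K₁ ⊆ K₁ ∪ K₂ := by
      apply Finset.union_subset
      · refine subset_trans hPD (Finset.union_subset ?_ ?_)
        · exact subset_trans Finset.sdiff_subset Finset.subset_union_left
        · exact subset_trans Finset.sdiff_subset Finset.subset_union_right
      · exact Finset.subset_union_left
    have hPunion2 : P ∪ K₂ ⊆ K₁ ∪ K₂ := by
      apply Finset.union_subset
      · refine subset_trans hPD (Finset.union_subset ?_ ?_)
        · exact subset_trans Finset.sdiff_subset Finset.subset_union_left
        · exact subset_trans Finset.sdiff_subset Finset.subset_union_right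
      · exact Finset.subset_union_right
    have hxAB : x ∉ A ∪ B := by
      intro hxm
      rcases Finset.mem_union.1 hxm with h | h
      · exact (Finset.mem_sdiff.1 h).2 hx2
      · exact (Finset.mem_sdiff.1 h).2 hx1
    -- K₁ side
    have hBsubP : B ⊆ P := by
      by_cases hlt : (P ∪ K₁).card < (K₁ ∪ K₂).card
      · exfalso
        obtain ⟨y, hy⟩ := hPA
        rw [mem_inter] at hy
        have hyP : y ∈ P ∩ K₁ :=
          Finset.mem_inter.2 ⟨hy.1, (Finset.mem_sdiff.1 hy.2).1⟩
        have hPK := ih P K₁ (by omega) hPprim ⟨h1r, h1c, h1e⟩ ⟨y, hyP⟩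
        have : x ∈ A ∪ B := hPD (hPK ▸ hx1)
        exact hxAB this
      · push_neg at hlt
        have hequ : P ∪ K₁ = K₁ ∪ K₂ :=
          Finset.eq_of_subset_of_card_le hPunion hlt
        intro z hz
        have hz2 : z ∈ K₂ := (Finset.mem_sdiff.1 hz).1
        have hz1 : z ∉ K₁ := (Finset.mem_sdiff.1 hz).2
        have : z ∈ P ∪ K₁ := hequ ▸ (Finset.mem_union_right _ hz2)
        rcases Finset.mem_union.1 this with h | h
        · exact h
        · exact absurd h hz1
    have hAsubP : A ⊆ P := by
      by_cases hlt : (P ∪ K₂).card < (K₁ ∪ K₂).card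
      · exfalso
        obtain ⟨y, hy⟩ := hPB
        rw [mem_inter] at hy
        have hyP : y ∈ P ∩ K₂ :=
          Finset.mem_inter.2 ⟨hy.1, (Finset.mem_sdiff.1 hy.2).1⟩
        have hPK := ih P K₂ (by omega) hPprim ⟨h2r, h2c, h2e⟩ ⟨y, hyP⟩
        have : x ∈ A ∪ B := hPD (hPK ▸ hx2)
        exact hxAB this
      · push_neg at hlt
        have hequ : P ∪ K₂ = K₁ ∪ K₂ :=
          Finset.eq_of_subset_of_card_le hPunion2 hlt
        intro z hz
        have hz1 : z ∈ K₁ := (Finset.mem_sdiff.1 hz).1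
        have hz2 : z ∉ K₂ := (Finset.mem_sdiff.1 hz).2
        have : z ∈ P ∪ K₂ := hequ ▸ (Finset.mem_union_left _ hz1)
        rcases Finset.mem_union.1 this with h | h
        · exact h
        · exact absurd h hz2
    have hPD' : P = A ∪ B :=
      Finset.Subset.antisymm hPD (Finset.union_subset hAsubP hBsubP)
    have hsum0 : ∑ v ∈ P, v = 0 := prim_sum_zero hprim hnoexc hPprim
    rw [hPD', Finset.sum_union hABdisj, hsAB] at hsum0
    have hsB : ∑ v ∈ B, v = 0 := by
      funext i
      have h2 := congrFun hsum0 i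
      simp only [Pi.add_apply, Pi.zero_apply] at h2
      have h3 : (∑ v ∈ B, v) i = 0 := by omega
      simpa using h3
    have hBK : B ⊆ K₂.erase x :=
      fun z hz => mem_erase.2 ⟨fun e => (Finset.mem_sdiff.1 hz).2 (e ▸ hx1),
        (Finset.mem_sdiff.1 hz).1⟩
    exact sum_ne_zero_of_zind hBne (zind_mono hBK (cone_zind (h2e x hx2))) hsB

include hprim hnoexc in
/-- every ray lies in a primitive set -/
lemma cover {ρ : Fin n → ℤ} (hρ : ρ ∈ F.rays) :
    ∃ P, IsPrimitiveSet F P ∧ ρ ∈ P := by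
  classical
  obtain ⟨σ, hσ, c, hc0, hxc⟩ := F.complete (-(vR ρ))
  have hxc' : -(vR ρ) = ∑ v ∈ σ, c v • vR v := hxc
  have hσR : RindF σ := cone_rindF hσ
  have hρσ : ρ ∉ σ := by
    intro hρσ
    set a : (Fin n → ℤ) → ℝ := fun v => c v + (if v = ρ then 1 else 0) with ha
    have hsum : ∑ v ∈ σ, a v • vR v = 0 := by
      have e1 : ∀ v ∈ σ, a v • vR v
          = c v • vR v + (if v = ρ then (1:ℝ) else 0) • vR v := by
        intro v _
        rw [ha]
        simp only
        rw [add_smul]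
      rw [Finset.sum_congr rfl e1, Finset.sum_add_distrib]
      have e2 : ∑ v ∈ σ, (if v = ρ then (1:ℝ) else 0) • vR v = vR ρ := by
        have e3 : ∀ v ∈ σ, (if v = ρ then (1:ℝ) else 0) • vR v
            = if v = ρ then vR v else 0 := by
          intro v _
          split_ifs <;> simp
        rw [Finset.sum_congr rfl e3, Finset.sum_ite_eq' σ ρ (fun v => vR v), if_pos hρσ]
      rw [e2, ← hxc', neg_add_cancel]
    have h1 := (rind_iff σ).1 hσR a hsum ρ hρσ
    rw [ha] at h1
    norm_num at h1
    have := hc0 ρ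
    linarith
  set S := σ.filter (fun v => c v ≠ 0) with hSdef
  have hSσ : S ⊆ σ := Finset.filter_subset _ _
  have heq : vR ρ = ∑ v ∈ S, (-(c v)) • vR v := by
    have h1 : ∑ v ∈ S, c v • vR v = ∑ v ∈ σ, c v • vR v := by
      apply Finset.sum_subset hSσ
      intro v hv hnv
      have : c v = 0 := by
        by_contra hne
        exact hnv (mem_filter.2 ⟨hv, hne⟩)
      rw [this, zero_smul]
    have h2 : vR ρ = -∑ v ∈ S, c v • vR v := by
      rw [h1, ← hxc', neg_neg]
    rw [h2, ← Finset.sum_neg_distrib]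
    apply Finset.sum_congr rfl
    intro v _
    rw [neg_smul]
  have hρS : ρ ∉ S := fun h => hρσ (hSσ h)
  have hd : ∀ v ∈ S, -(c v) ≠ 0 := fun v hv => neg_ne_zero.2 (mem_filter.1 hv).2
  have hSz : Zind S := zind_mono hSσ (cone_zind hσ)
  have hSrays : S ⊆ F.rays := subset_trans hSσ (F.cone_rays σ hσ)
  exact ⟨insert ρ S,
    primitive_builder hprim hnoexc hSrays hSz hρ hρS _ hd heq,
    Finset.mem_insert_self _ _⟩

end WithHyps

end Stmt12

/-- a complete nonsingular fan in which (a) every primitive relation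
has right-hand side 0 or a single ray generator and (b) no ray generator is the sum
of a nonempty linearly independent set of other ray generators, satisfies: every
linearly independent set of ray generators spans a cone; consequently the fan is
that of a product of projective spaces, i.e. the rays partition into groups each
summing to zero. -/
theorem stmt_12 (n : ℕ) (F : CompleteNonsingFan n)
    (hprim : ∀ P, IsPrimitiveSet F P → (∑ v ∈ P, v = 0 ∨ ∑ v ∈ P, v ∈ F.rays))
    (hnoexc : ∀ ρ ∈ F.rays, ∀ T ⊆ F.rays.erase ρ, T.Nonempty →
        LinearIndependent ℤ (fun v : T => (v : Fin n → ℤ)) → ∑ v ∈ T, v ≠ ρ) :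
    (∀ T ⊆ F.rays, LinearIndependent ℤ (fun v : T => (v : Fin n → ℤ)) → T ∈ F.cones) ∧
    (∃ Pp : Finset (Finset (Fin n → ℤ)),
        (∀ p ∈ Pp, p ⊆ F.rays ∧ p.Nonempty ∧ ∑ v ∈ p, v = 0) ∧
        (∀ ρ ∈ F.rays, ∃! p, p ∈ Pp ∧ ρ ∈ p)) := by
  classical
  constructor
  · intro T hT h
    exact Stmt12.indep_mem_cones hprim hnoexc T hT h
  · refine ⟨F.rays.powerset.filter (fun p => IsPrimitiveSet F p), ?_, ?_⟩
    · intro p hp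
      rw [Finset.mem_filter, Finset.mem_powerset] at hp
      refine ⟨hp.1, ?_, Stmt12.prim_sum_zero hprim hnoexc hp.2⟩
      rw [Finset.nonempty_iff_ne_empty]
      rintro rfl
      exact hp.2.2.1 F.empty_mem
    · intro ρ hρ
      obtain ⟨P, hP, hρP⟩ := Stmt12.cover hprim hnoexc hρ
      refine ⟨P, ⟨Finset.mem_filter.2 ⟨Finset.mem_powerset.2 hP.1, hP⟩, hρP⟩, ?_⟩
      rintro q ⟨hq, hρq⟩
      rw [Finset.mem_filter] at hq
      exact Stmt12.prim_disjoint hprim hnoexc ((q ∪ P).card + 1) q P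
        (Nat.lt_succ_self _) hq.2 hP ⟨ρ, Finset.mem_inter.2 ⟨hρq, hρP⟩⟩
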